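/- Let M = (f₁, …, fₙ) be a d×n matrix over K of rank d, let u ∈ ℤⁿ, and let Λ_u be the R-submodule of K^d generated by z^{-u₁}f₁, …, z^{-uₙ}fₙ. Fix i with f_i ≠ 0. Then max{μ ∈ ℤ : z^{-μ} f_i ∈ Λ_u} exists and equals the minimum, over all (d−1)-subsets σ ⊆ {1,…,n}∖{i} such that det M_{σ∪{i}} ≠ 0, of the maximum, over all j ∉ σ such that det M_{σ∪{j}} ≠ 0, of the integer val(det M_{σ∪{i}}) − val(det M_{σ∪{j}}) + u_j. (This is the coordinate formula identifying the lattice Λ_u in the membrane [M] with the point π_{L_p}(u) of the tropical linear space L_p, where p(ω) = val(det M_ω).) -/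

import Mathlib

/- Coordinate formula for the isomorphism between a membrane [M] and the standard
   triangulation of the tropical linear space L_p: for Λ_u = R{z^{-u₁}f₁, …, z^{-uₙ}fₙ}
   and f_i ≠ 0, the maximum max{μ ∈ ℤ : z^{-μ} f_i ∈ Λ_u} equals
   min_{σ : |σ|=d−1, det M_{σ∪{i}} ≠ 0} max_{j ∉ σ, det M_{σ∪{j}} ≠ 0}
     (val det M_{σ∪{i}} − val det M_{σ∪{j}} + u_j). -/

noncomputable section
set_option synthInstance.maxHeartbeats 1000000
set_option maxHeartbeats 1000000

abbrev K := LaurentSeries ℂ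

abbrev Rring : Subring K := (HahnSeries.ofPowerSeries ℤ ℂ).range

def z : K := HahnSeries.single 1 1

/-- The determinant of the d×d submatrix of `M` on the columns indexed by `ω`
(`0` if `ω` does not have exactly `d` elements). -/
def subDet {d n : ℕ} (M : Matrix (Fin d) (Fin n) K) (ω : Finset (Fin n)) : K :=
  if h : ω.card = d then
    (M.submatrix id (fun k => ((ω.orderIsoOfFin h) k : Fin n))).det
  else 0


open HahnSeries

lemma z_pow (m : ℕ) : z ^ m = (HahnSeries.single (m : ℤ) 1 : K) := by
  induction m with
  | zero => simpa using (single_zero_one).symm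
  | succ k ih =>
    rw [pow_succ, ih, z, single_mul_single, mul_one]
    norm_num

lemma z_zpow (m : ℤ) : z ^ m = (HahnSeries.single m 1 : K) := by
  cases m with
  | ofNat k => rw [Int.ofNat_eq_coe, zpow_natCast, z_pow]
  | negSucc k =>
    rw [zpow_negSucc, z_pow]
    refine inv_eq_of_mul_eq_one_left ?_
    rw [single_mul_single, one_mul]
    have : Int.negSucc k + ((k:ℕ)+1 : ℕ) = 0 := by
      rw [Int.negSucc_eq]; push_cast; ring
    rw [this, single_zero_one]

lemma z_zpow_ne (m : ℤ) : z ^ m ≠ 0 := by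
  rw [z_zpow]; exact single_ne_zero one_ne_zero

lemma z_zpow_order (m : ℤ) : (z ^ m).order = m := by
  rw [z_zpow]; exact order_single one_ne_zero

/-- "valuation ≥ ν" predicate, robust at 0. -/
def vge (ν : ℤ) (x : K) : Prop := ∀ k < ν, x.coeff k = 0

lemma vge_zero (ν : ℤ) : vge ν (0 : K) := fun k _ => rfl

lemma vge_mono {μ ν : ℤ} (h : μ ≤ ν) {x : K} (hx : vge ν x) : vge μ x :=
  fun k hk => hx k (lt_of_lt_of_le hk h)

lemma vge_iff_le_order {ν : ℤ} {x : K} (hx : x ≠ 0) : vge ν x ↔ ν ≤ x.order := by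
  constructor
  · intro h
    by_contra hlt
    exact mt coeff_order_eq_zero.mp hx (h _ (not_le.mp hlt))
  · intro h k hk
    exact coeff_eq_zero_of_lt_order (lt_of_lt_of_le hk h)

lemma vge_add {ν : ℤ} {x y : K} (hx : vge ν x) (hy : vge ν y) : vge ν (x + y) := by
  intro k hk
  rw [HahnSeries.coeff_add, hx k hk, hy k hk, add_zero]

lemma vge_sum {ν : ℤ} {α : Type*} (s : Finset α) (f : α → K)
    (h : ∀ a ∈ s, vge ν (f a)) : vge ν (∑ a ∈ s, f a) := by
  classical
  induction s using Finset.induction_on with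
  | empty => simpa using vge_zero ν
  | @insert a s hni ih =>
    rw [Finset.sum_insert hni]
    exact vge_add (h a (Finset.mem_insert_self a s))
      (ih fun b hb => h b (Finset.mem_insert_of_mem hb))

lemma vge_mul {a b : ℤ} {x y : K} (hx : vge a x) (hy : vge b y) : vge (a + b) (x * y) := by
  rcases eq_or_ne x 0 with rfl | hx0
  · rw [zero_mul]; exact vge_zero _
  rcases eq_or_ne y 0 with rfl | hy0
  · rw [mul_zero]; exact vge_zero _
  rw [vge_iff_le_order (mul_ne_zero hx0 hy0), HahnSeries.order_mul hx0 hy0]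
  exact add_le_add ((vge_iff_le_order hx0).mp hx) ((vge_iff_le_order hy0).mp hy)

lemma order_inv {x : K} (hx : x ≠ 0) : (x⁻¹).order = - x.order := by
  have h1 : x * x⁻¹ = 1 := mul_inv_cancel₀ hx
  have h2 := HahnSeries.order_mul hx (inv_ne_zero hx)
  rw [h1] at h2
  have : (1 : K).order = 0 := by
    rw [← single_zero_one]; exact order_single one_ne_zero
  omega

lemma mem_Rring_iff {x : K} : x ∈ Rring ↔ vge 0 x := by
  constructor
  · rintro ⟨p, rfl⟩ k hk
    rw [show ((HahnSeries.ofPowerSeries ℤ ℂ) p) = ((p : LaurentSeries ℂ)) from rfl,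
      PowerSeries.coeff_coe, if_pos hk]
  · intro h
    rcases eq_or_ne x 0 with rfl | hx0
    · exact ⟨0, map_zero _⟩
    have h0 : 0 ≤ x.order := (vge_iff_le_order hx0).mp h
    refine ⟨PowerSeries.X ^ x.order.natAbs * x.powerSeriesPart, ?_⟩
    rw [map_mul, map_pow, ofPowerSeries_X, single_pow, one_pow]
    simp only [nsmul_eq_mul, mul_one]
    rw [Int.natAbs_of_nonneg h0]
    exact x.single_order_mul_powerSeriesPart


lemma det_cols_congr {d n : ℕ} (M : Matrix (Fin d) (Fin n) K) (g h : Fin d → Fin n)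
    (hg : Function.Injective g) (hh : Function.Injective h)
    (hr : Set.range g = Set.range h) :
    ((M.submatrix id g).det = 0 ↔ (M.submatrix id h).det = 0) ∧
      (M.submatrix id g).det.order = (M.submatrix id h).det.order := by
  let e : Fin d ≃ Fin d :=
    (Equiv.ofInjective g hg).trans ((Equiv.setCongr hr).trans (Equiv.ofInjective h hh).symm)
  have he : ∀ k, h (e k) = g k := by
    intro k
    have := Equiv.apply_ofInjective_symm hh ((Equiv.setCongr hr) ⟨g k, Set.mem_range_self k⟩)
    simpa [e] using this
  have hsub : M.submatrix id g = (M.submatrix id h).submatrix id e := by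
    rw [Matrix.submatrix_submatrix]
    ext r l
    simp [he l]
  rw [hsub, Matrix.det_permute' e (M.submatrix id h)]
  rcases Int.units_eq_one_or (Equiv.Perm.sign e) with hs | hs
  · rw [hs]; simp
  · have hcast : ∀ y : K, (((Equiv.Perm.sign e : ℤ) : K)) * y = -y := by
      intro y; rw [hs]; push_cast; ring
    rw [hcast]
    constructor
    · simp
    · exact HahnSeries.order_neg

lemma orderIso_inj {n d : ℕ} (ω : Finset (Fin n)) (h : ω.card = d) :
    Function.Injective (fun k => ((ω.orderIsoOfFin h) k : Fin n)) := by
  intro a b hab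
  exact (ω.orderIsoOfFin h).injective (Subtype.ext hab)

lemma orderIso_range {n d : ℕ} (ω : Finset (Fin n)) (h : ω.card = d) :
    Set.range (fun k => ((ω.orderIsoOfFin h) k : Fin n)) = ↑ω := by
  ext x
  constructor
  · rintro ⟨k, rfl⟩
    exact ((ω.orderIsoOfFin h) k).2
  · intro hx
    exact ⟨(ω.orderIsoOfFin h).symm ⟨x, hx⟩, by simp⟩

lemma subDet_props {d n : ℕ} (M : Matrix (Fin d) (Fin n) K) (ω : Finset (Fin n))
    (h : ω.card = d) (g : Fin d → Fin n) (hg : Function.Injective g)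
    (hr : Set.range g = ↑ω) :
    (((M.submatrix id g).det = 0) ↔ subDet M ω = 0) ∧
      (M.submatrix id g).det.order = (subDet M ω).order := by
  rw [subDet, dif_pos h]
  exact det_cols_congr M g _ hg (orderIso_inj ω h) (by rw [hr, orderIso_range])

lemma updateCol_eq_submatrix {d n : ℕ} (M : Matrix (Fin d) (Fin n) K)
    (g : Fin d → Fin n) (k : Fin d) (j : Fin n) :
    (M.submatrix id g).updateCol k (fun r => M r j)
      = M.submatrix id (Function.update g k j) := by
  ext r l
  by_cases hl : l = k <;>
    simp [Matrix.updateCol_apply, Function.update, hl]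

lemma update_inj {d n : ℕ} {g : Fin d → Fin n} (hg : Function.Injective g)
    (k : Fin d) (j : Fin n) (hj : ∀ l, g l = j → l = k) :
    Function.Injective (Function.update g k j) := by
  intro a b hab
  by_cases ha : a = k <;> by_cases hb : b = k
  · rw [ha, hb]
  · subst ha
    rw [Function.update_self, Function.update_of_ne hb] at hab
    exact absurd (hj b hab.symm) hb
  · subst hb
    rw [Function.update_self, Function.update_of_ne ha] at hab
    exact absurd (hj a hab) ha
  · rw [Function.update_of_ne ha, Function.update_of_ne hb] at hab
    exact hg hab

lemma update_range {d n : ℕ} {g : Fin d → Fin n} (hg : Function.Injective g)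
    (k : Fin d) (j : Fin n) :
    Set.range (Function.update g k j) = insert j (Set.range g \ {g k}) := by
  ext x
  constructor
  · rintro ⟨a, rfl⟩
    rcases eq_or_ne a k with rfl | ha
    · rw [Function.update_self]; exact Set.mem_insert _ _
    · rw [Function.update_of_ne ha]
      exact Set.mem_insert_of_mem _ ⟨⟨a, rfl⟩, fun hc => ha (hg hc)⟩
  · rintro (rfl | ⟨⟨a, rfl⟩, hne⟩)
    · exact ⟨k, Function.update_self k x g⟩
    · have ha : a ≠ k := fun hc => hne (by rw [hc]; rfl)
      exact ⟨a, Function.update_of_ne ha j g⟩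

lemma updateDet_subDet {d n : ℕ} (M : Matrix (Fin d) (Fin n) K) {B : Finset (Fin n)}
    (hB : B.card = d) {g : Fin d → Fin n} (hg : Function.Injective g)
    (hr : Set.range g = ↑B) (k : Fin d) (j : Fin n) (hj : ∀ l, g l = j → l = k) :
    ((((M.submatrix id g).updateCol k (fun r => M r j)).det = 0
        ↔ subDet M (insert j (B.erase (g k))) = 0)
      ∧ ((M.submatrix id g).updateCol k (fun r => M r j)).det.order
          = (subDet M (insert j (B.erase (g k)))).order)
      ∧ (insert j (B.erase (g k))).card = d := by
  have hgk : g k ∈ B := by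
    rw [← Finset.mem_coe, ← hr]; exact Set.mem_range_self k
  have hjB : j ∉ B.erase (g k) := by
    intro hc
    obtain ⟨hne, hmem⟩ := Finset.mem_erase.mp hc
    have : j ∈ Set.range g := by rw [hr]; exact hmem
    obtain ⟨l, hl⟩ := this
    exact hne (by rw [← hl, hj l hl])
  have hd1 : 1 ≤ d := by
    have := Finset.card_pos.mpr ⟨g k, hgk⟩
    omega
  have hcard : (insert j (B.erase (g k))).card = d := by
    rw [Finset.card_insert_of_notMem hjB, Finset.card_erase_of_mem hgk, hB]
    omega
  refine ⟨?_, hcard⟩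
  rw [updateCol_eq_submatrix]
  apply subDet_props M _ hcard _ (update_inj hg k j hj)
  rw [update_range hg, hr]
  simp

open Matrix in
lemma exists_basis_cols {d n : ℕ} (M : Matrix (Fin d) (Fin n) K) (hrank : M.rank = d) :
    ∃ g : Fin d → Fin n, Function.Injective g ∧ (M.submatrix id g).det ≠ 0 := by
  classical
  have hspan : Submodule.span K (Set.range Mᵀ) = ⊤ := by
    rw [show Set.range Mᵀ = Set.range M.col from rfl, ← Matrix.range_mulVecLin]
    apply Submodule.eq_top_of_finrank_eq
    rw [show Module.finrank K (Fin d → K) = d by simp [Module.finrank_pi]]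
    exact hrank
  obtain ⟨b, hb1, hb2, hb3⟩ := exists_linearIndependent K (Set.range Mᵀ)
  rw [hspan] at hb2
  let basis : Module.Basis b K (Fin d → K) := Module.Basis.mk hb3 (by rw [Subtype.range_coe]; exact hb2.ge)
  haveI : Fintype b := FiniteDimensional.fintypeBasisIndex basis
  have hcard : Fintype.card b = d := by
    rw [← Module.finrank_eq_card_basis basis]
    simp [Module.finrank_pi]
  let e : Fin d ≃ b := (Fintype.equivFinOfCardEq hcard).symm
  have hφ : ∀ x : b, ∃ j : Fin n, Mᵀ j = (x : Fin d → K) := fun x => hb1 x.2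
  choose φ hφspec using hφ
  refine ⟨fun k => φ (e k), ?_, ?_⟩
  · intro a c hac
    apply e.injective
    apply Subtype.ext
    rw [← hφspec (e a), ← hφspec (e c)]
    simp only at hac
    rw [hac]
  · set g : Fin d → Fin n := fun k => φ (e k) with hgdef
    have hcols : (fun k => (M.submatrix id g)ᵀ k) = (fun x : b => (x : Fin d → K)) ∘ e := by
      funext k
      funext r
      have := congr_fun (hφspec (e k)) r
      simpa [Matrix.transpose_apply, Matrix.submatrix_apply] using this
    have hli : LinearIndependent K (fun k => (M.submatrix id g)ᵀ k) := by
      rw [hcols]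
      exact hb3.comp e e.injective
    have := (Matrix.isUnit_iff_isUnit_det _).mp
      ((Matrix.linearIndependent_cols_iff_isUnit).mp hli)
    exact this.ne_zero

lemma cramer_expand {d n : ℕ} (M : Matrix (Fin d) (Fin n) K) (g : Fin d → Fin n) (i : Fin n) :
    (M.submatrix id g).det • (fun r => M r i)
      = ∑ k : Fin d, ((M.submatrix id g).updateCol k (fun r => M r i)).det
          • (fun r => M r (g k)) := by
  set A := M.submatrix id g with hA
  set c : Fin d → K := fun r => M r i with hc
  have h := Matrix.mulVec_cramer A c
  funext r
  have hr := congr_fun h r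
  simp only [Matrix.mulVec, dotProduct, Pi.smul_apply, smul_eq_mul] at hr
  rw [Pi.smul_apply, smul_eq_mul, ← hr, Finset.sum_apply]
  apply Finset.sum_congr rfl
  intro k _
  rw [Pi.smul_apply, smul_eq_mul, Matrix.cramer_apply]
  have : A r k = M r (g k) := rfl
  rw [this, mul_comm]

lemma keyF {d n : ℕ} (M : Matrix (Fin d) (Fin n) K) (u : Fin n → ℤ) (i : Fin n)
    (σ : Finset (Fin n)) (hd : 0 < d) (hσc : σ.card = d - 1) (hiσ : i ∉ σ)
    (hPσ : subDet M (insert i σ) ≠ 0) (μ : ℤ)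
    (hμ : z ^ (-μ) • (fun r => M r i) ∈ Submodule.span Rring (Set.range fun j : Fin n =>
          z ^ (-(u j)) • fun r => M r j)) :
    ∃ j, j ∉ σ ∧ subDet M (insert j σ) ≠ 0 ∧
      μ ≤ (subDet M (insert i σ)).order - (subDet M (insert j σ)).order + u j := by
  classical
  have hc' : (insert i σ).card = d := by
    rw [Finset.card_insert_of_notMem hiσ, hσc]; omega
  set gσ : Fin d → Fin n := fun k => (((insert i σ).orderIsoOfFin hc') k : Fin n) with hgσ
  have hgσinj : Function.Injective gσ := orderIso_inj _ hc'
  have hgσr : Set.range gσ = ↑(insert i σ) := orderIso_range _ hc'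
  set Aσ : Matrix (Fin d) (Fin d) K := M.submatrix id gσ with hAσdef
  have hPA : subDet M (insert i σ) = Aσ.det := by rw [subDet, dif_pos hc']
  set k_i : Fin d := ((insert i σ).orderIsoOfFin hc').symm ⟨i, Finset.mem_insert_self i σ⟩
    with hki
  have hgki : gσ k_i = i := by
    rw [hgσ]
    simp [hki]
  set E : Fin n → K := fun j => (Aσ.updateCol k_i (fun r => M r j)).det with hE
  have hEi : E i = Aσ.det := by
    rw [hE]
    have hcoli : (fun r => M r i) = (fun r => Aσ r k_i) := by
      funext r
      rw [hAσdef, Matrix.submatrix_apply, id_eq, hgki]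
    simp only [hcoli]
    rw [Matrix.updateCol_eq_self]
  obtain ⟨c, hc⟩ := (Submodule.mem_span_range_iff_exists_fun Rring).mp hμ
  have hterm_eq : ∀ j : Fin n, Matrix.cramer Aσ ((c j) • (z ^ (-(u j)) • fun r => M r j)) k_i
      = (c j : K) * (z ^ (-(u j)) * E j) := by
    intro j
    have h1 : ((c j) • (z ^ (-(u j)) • (fun r => M r j)) : Fin d → K)
        = ((c j : K) * z ^ (-(u j))) • (fun r => M r j) := by
      exact smul_smul ((c j : K)) (z ^ (-(u j))) (fun r => M r j)
    rw [h1, LinearMap.map_smul, Pi.smul_apply, smul_eq_mul, Matrix.cramer_apply, mul_assoc]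
  have hLHS : Matrix.cramer Aσ (z ^ (-μ) • fun r => M r i) k_i = z ^ (-μ) * Aσ.det := by
    rw [LinearMap.map_smul, Pi.smul_apply, smul_eq_mul, Matrix.cramer_apply,
      show (Aσ.updateCol k_i fun r => M r i).det = E i from rfl, hEi]
  have hmain : ∑ j : Fin n, (c j : K) * (z ^ (-(u j)) * E j) = z ^ (-μ) * Aσ.det := by
    have := congr_fun (congr_arg (Matrix.cramer Aσ) hc) k_i
    rw [map_sum] at this
    rw [Finset.sum_apply] at this
    rw [← hLHS, ← this]
    exact Finset.sum_congr rfl fun j _ => (hterm_eq j).symm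
  have hEσ : ∀ j ∈ σ, E j = 0 := by
    intro j hj
    have hjmem : j ∈ insert i σ := Finset.mem_insert_of_mem hj
    obtain ⟨l, hl⟩ : ∃ l, gσ l = j := by
      have : j ∈ Set.range gσ := by rw [hgσr]; exact hjmem
      exact this
    have hlki : l ≠ k_i := by
      intro hc''
      rw [hc'', hgki] at hl
      exact hiσ (hl ▸ hj)
    apply Matrix.det_zero_of_column_eq hlki
    intro r
    rw [Matrix.updateCol_apply, Matrix.updateCol_apply]
    rw [if_neg hlki, if_pos rfl]
    rw [hAσdef, Matrix.submatrix_apply, id_eq, hl]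
  have hEout : ∀ j, j ∉ σ → ((E j = 0 ↔ subDet M (insert j σ) = 0)
      ∧ (E j).order = (subDet M (insert j σ)).order) := by
    intro j hj
    have hj' : ∀ l, gσ l = j → l = k_i := by
      intro l hl
      have hjmem : j ∈ insert i σ := by
        rw [← Finset.mem_coe, ← hgσr]; exact ⟨l, hl⟩
      rcases Finset.mem_insert.mp hjmem with rfl | hjs
      · exact hgσinj (by rw [hl, hgki])
      · exact absurd hjs hj
    have h := updateDet_subDet M hc' hgσinj hgσr k_i j hj'
    rw [hgki, Finset.erase_insert hiσ] at h
    exact h.1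
  by_contra hcon
  push_neg at hcon
  have hAne : Aσ.det ≠ 0 := by rw [← hPA]; exact hPσ
  set t : ℤ := Aσ.det.order - μ with ht
  have hvge : vge (t+1) (z ^ (-μ) * Aσ.det) := by
    rw [← hmain]
    apply vge_sum
    intro j _
    rcases eq_or_ne ((c j : K)) 0 with h0 | hc0
    · rw [h0, zero_mul]; exact vge_zero _
    rcases eq_or_ne (E j) 0 with hE0 | hE0
    · rw [hE0, mul_zero, mul_zero]; exact vge_zero _
    have hjσ : j ∉ σ := fun hjs => hE0 (hEσ j hjs)
    have hsub0 : subDet M (insert j σ) ≠ 0 := fun hs => hE0 ((hEout j hjσ).1.mpr hs)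
    have hlt := hcon j hjσ hsub0
    rw [hPA] at hlt
    have h1 : vge 0 (c j : K) := mem_Rring_iff.mp (c j).2
    have h2 : vge (-(u j)) ((z : K) ^ (-(u j))) := by
      rw [vge_iff_le_order (z_zpow_ne _), z_zpow_order]
    have h3 : vge ((subDet M (insert j σ)).order) (E j) := by
      rw [vge_iff_le_order hE0, (hEout j hjσ).2]
    have hmul := vge_mul h1 (vge_mul h2 h3)
    apply vge_mono _ hmul
    omega
  have hne : z ^ (-μ) * Aσ.det ≠ 0 := mul_ne_zero (z_zpow_ne _) hAne
  have hle := (vge_iff_le_order hne).mp hvge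
  rw [HahnSeries.order_mul (z_zpow_ne _) hAne, z_zpow_order] at hle
  omega

theorem membrane_coordinate_formula {d n : ℕ}
    (M : Matrix (Fin d) (Fin n) K) (hrank : M.rank = d)
    (u : Fin n → ℤ) (i : Fin n) (hfi : (fun r => M r i) ≠ 0) :
    ∃ m : ℤ,
      IsGreatest {μ : ℤ | z ^ (-μ) • (fun r => M r i) ∈
        Submodule.span Rring (Set.range fun j : Fin n =>
          z ^ (-(u j)) • fun r => M r j)} m ∧
      IsLeast {y : ℤ | ∃ σ : Finset (Fin n), σ.card = d - 1 ∧ i ∉ σ ∧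
        subDet M (insert i σ) ≠ 0 ∧
        IsGreatest {t : ℤ | ∃ j : Fin n, j ∉ σ ∧ subDet M (insert j σ) ≠ 0 ∧
          t = (subDet M (insert i σ)).order - (subDet M (insert j σ)).order + u j} y} m := by
  classical
  have hz : (z : K) ≠ 0 := HahnSeries.single_ne_zero one_ne_zero
  have hd : 0 < d := by
    rcases Nat.eq_zero_or_pos d with rfl | h
    · exact absurd (funext fun r => r.elim0) hfi
    · exact h
  obtain ⟨g₀, hg₀inj, hg₀det⟩ := exists_basis_cols M hrank
  set B₀ : Finset (Fin n) := Finset.image g₀ Finset.univ with hB₀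
  have hB₀card : B₀.card = d := by
    rw [hB₀, Finset.card_image_of_injective _ hg₀inj, Finset.card_univ, Fintype.card_fin]
  have hB₀r : Set.range g₀ = ↑B₀ := by rw [hB₀]; simp
  have hB₀det : subDet M B₀ ≠ 0 :=
    fun h0 => hg₀det (((subDet_props M B₀ hB₀card g₀ hg₀inj hB₀r).1).mpr h0)
  set F : Finset (Finset (Fin n)) :=
    Finset.univ.filter (fun B => B.card = d ∧ subDet M B ≠ 0) with hF
  have hFne : F.Nonempty := ⟨B₀, Finset.mem_filter.mpr ⟨Finset.mem_univ _, hB₀card, hB₀det⟩⟩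
  obtain ⟨B, hBF, hBmin⟩ :=
    F.exists_min_image (fun B => (subDet M B).order - ∑ j ∈ B, u j) hFne
  have hBcard : B.card = d := ((Finset.mem_filter.mp hBF).2).1
  have hBdet : subDet M B ≠ 0 := ((Finset.mem_filter.mp hBF).2).2
  set g : Fin d → Fin n := fun k => ((B.orderIsoOfFin hBcard) k : Fin n) with hgdef
  have hginj : Function.Injective g := orderIso_inj B hBcard
  have hgr : Set.range g = ↑B := orderIso_range B hBcard
  set A : Matrix (Fin d) (Fin d) K := M.submatrix id g with hAdef
  have hPA : subDet M B = A.det := by rw [subDet, dif_pos hBcard]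
  have hA0 : A.det ≠ 0 := by rw [← hPA]; exact hBdet
  set D : Fin d → K := fun k => (A.updateCol k (fun r => M r i)).det with hD
  have hexp : A.det • (fun r => M r i) = ∑ k : Fin d, D k • (fun r => M r (g k)) :=
    cramer_expand M g i
  have hDspec : ∀ k, D k ≠ 0 → ∀ l, g l = i → l = k := by
    intro k hk l hl
    by_contra hne
    apply hk
    apply Matrix.det_zero_of_column_eq hne
    intro r
    rw [Matrix.updateCol_apply, Matrix.updateCol_apply, if_neg hne, if_pos rfl]
    rw [hAdef, Matrix.submatrix_apply, id_eq, hl]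
  have hDex : ∃ k, D k ≠ 0 := by
    by_contra hall
    push_neg at hall
    apply hfi
    funext r
    have h := congr_fun hexp r
    simp only [Pi.smul_apply, smul_eq_mul, Finset.sum_apply] at h
    have h2 : A.det * M r i = 0 := by
      rw [h]
      apply Finset.sum_eq_zero
      intro k _
      rw [hall k, zero_mul]
    rcases mul_eq_zero.mp h2 with hcase | hcase
    · exact absurd hcase hA0
    · exact hcase
  obtain ⟨k₀, hk₀⟩ := hDex
  obtain ⟨ks, hksmem, hksmin⟩ := (Finset.univ.filter (fun k => D k ≠ 0)).exists_min_image
    (fun k => (D k).order - A.det.order + u (g k))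
    ⟨k₀, Finset.mem_filter.mpr ⟨Finset.mem_univ _, hk₀⟩⟩
  have hksD : D ks ≠ 0 := (Finset.mem_filter.mp hksmem).2
  set m' : ℤ := (D ks).order - A.det.order + u (g ks) with hm'
  have hupd := updateDet_subDet M hBcard hginj hgr ks i (hDspec ks hksD)
  set σs : Finset (Fin n) := B.erase (g ks) with hσs
  have hPs : subDet M (insert i σs) ≠ 0 := fun h0 => hksD (hupd.1.1.mpr h0)
  have hPso : (D ks).order = (subDet M (insert i σs)).order := hupd.1.2
  have hgksB : g ks ∈ B := by
    rw [← Finset.mem_coe, ← hgr]; exact Set.mem_range_self ks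
  have hiσs : i ∉ σs := by
    intro hc
    obtain ⟨hne, hmem⟩ := Finset.mem_erase.mp hc
    have hir : i ∈ Set.range g := by rw [hgr]; exact hmem
    obtain ⟨l, hl⟩ := hir
    exact hne (by rw [← hl, hDspec ks hksD l hl])
  have hσscard : σs.card = d - 1 := by
    rw [hσs, Finset.card_erase_of_mem hgksB, hBcard]
  have hBins : insert (g ks) σs = B := Finset.insert_erase hgksB
  have hgksσs : g ks ∉ σs := Finset.notMem_erase _ _
  have hAo : A.det.order = (subDet M B).order := by rw [hPA]
  have keyG : ∀ j, j ∉ σs → subDet M (insert j σs) ≠ 0 →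
      (subDet M (insert i σs)).order - (subDet M (insert j σs)).order + u j ≤ m' := by
    intro j hjσ hjdet
    have hjcard : (insert j σs).card = d := by
      rw [Finset.card_insert_of_notMem hjσ, hσscard]; omega
    have hjF : insert j σs ∈ F := Finset.mem_filter.mpr ⟨Finset.mem_univ _, hjcard, hjdet⟩
    have hmin := hBmin _ hjF
    have hsB : ∑ l ∈ B, u l = u (g ks) + ∑ l ∈ σs, u l := by
      rw [← hBins, Finset.sum_insert hgksσs]
    have hsj : ∑ l ∈ insert j σs, u l = u j + ∑ l ∈ σs, u l := Finset.sum_insert hjσ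
    rw [hm']
    omega
  have hm'S : z ^ (-m') • (fun r => M r i) ∈
      Submodule.span Rring (Set.range fun j : Fin n =>
        z ^ (-(u j)) • fun r => M r j) := by
    have h1 : ∀ r, M r i = ∑ k : Fin d, (D k / A.det) * M r (g k) := by
      intro r
      have h := congr_fun hexp r
      simp only [Pi.smul_apply, smul_eq_mul, Finset.sum_apply] at h
      calc M r i = A.det⁻¹ * (A.det * M r i) := by
            rw [← mul_assoc, inv_mul_cancel₀ hA0, one_mul]
        _ = A.det⁻¹ * ∑ k : Fin d, D k * M r (g k) := by rw [h]
        _ = ∑ k : Fin d, (D k / A.det) * M r (g k) := by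
            rw [Finset.mul_sum]
            exact Finset.sum_congr rfl fun k _ => by ring
    have hzz : ∀ k : Fin d, (z:K) ^ (u (g k) - m') * z ^ (-(u (g k))) = z ^ (-m') := by
      intro k
      rw [← zpow_add₀ hz]
      congr 1
      ring
    have hrep : z ^ (-m') • (fun r => M r i)
        = ∑ k : Fin d, (z ^ (u (g k) - m') * (D k / A.det))
            • (z ^ (-(u (g k))) • fun r => M r (g k)) := by
      funext r
      simp only [Pi.smul_apply, smul_eq_mul, Finset.sum_apply]
      rw [h1 r, Finset.mul_sum]
      apply Finset.sum_congr rfl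
      intro k _
      rw [← hzz k]
      ring
    rw [hrep]
    apply Submodule.sum_mem
    intro k _
    have hck : (z ^ (u (g k) - m') * (D k / A.det)) ∈ Rring := by
      rw [mem_Rring_iff]
      rcases eq_or_ne (D k) 0 with h0 | h0
      · rw [h0, zero_div, mul_zero]; exact vge_zero 0
      · have hkmem : k ∈ Finset.univ.filter (fun k => D k ≠ 0) :=
          Finset.mem_filter.mpr ⟨Finset.mem_univ _, h0⟩
        have hle := hksmin k hkmem
        have hne2 : (z:K) ^ (u (g k) - m') * (D k / A.det) ≠ 0 :=
          mul_ne_zero (z_zpow_ne _) (div_ne_zero h0 hA0)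
        rw [vge_iff_le_order hne2,
          HahnSeries.order_mul (z_zpow_ne _) (div_ne_zero h0 hA0), z_zpow_order,
          div_eq_mul_inv, HahnSeries.order_mul h0 (inv_ne_zero hA0), order_inv hA0]
        omega
    exact Submodule.smul_mem _ (⟨_, hck⟩ : Rring) (Submodule.subset_span ⟨g k, rfl⟩)
  refine ⟨m', ⟨hm'S, ?_⟩, ?_, ?_⟩
  · intro μ hμ
    simp only [Set.mem_setOf_eq] at hμ
    obtain ⟨j, hj1, hj2, hj3⟩ := keyF M u i σs hd hσscard hiσs hPs μ hμ
    exact le_trans hj3 (keyG j hj1 hj2)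
  · simp only [Set.mem_setOf_eq]
    refine ⟨σs, hσscard, hiσs, hPs, ?_, ?_⟩
    · obtain ⟨j, hj1, hj2, hj3⟩ := keyF M u i σs hd hσscard hiσs hPs m' hm'S
      exact ⟨j, hj1, hj2, le_antisymm hj3 (keyG j hj1 hj2)⟩
    · rintro t ⟨j, hj1, hj2, rfl⟩
      exact keyG j hj1 hj2
  · rintro y ⟨σ, hσc, hiσ2, hPσ, hymem, hyub⟩
    obtain ⟨j, hj1, hj2, hj3⟩ := keyF M u i σ hd hσc hiσ2 hPσ m' hm'S
    exact le_trans hj3 (hyub ⟨j, hj1, hj2, rfl⟩)
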